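/- Affine form of Farkas' lemma: suppose the polyhedron {x : Ax ≤ b} is nonempty. Then the implication 'Ax ≤ b implies Ex ≤ F' holds for all x if and only if there exists a matrix P with nonnegative entries such that PA = E and Pb ≤ F. -/

import Mathlib

open Finset Matrix
open scoped InnerProductSpace

variable {H : Type*} [NormedAddCommGroup H] [NormedSpace ℝ H] [FiniteDimensional ℝ H]

lemma closed_cone_of_li {m : ℕ} (v : Fin m → H) (t : Finset (Fin m))
    (hli : LinearIndependent ℝ (fun i : t => v i)) :
    IsClosed {x : H | ∃ y : Fin m → ℝ, (∀ i, 0 ≤ y i) ∧ x = ∑ i ∈ t, y i • v i} := by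
  classical
  set L : (t → ℝ) →ₗ[ℝ] H := Fintype.linearCombination ℝ (fun i : t => v i) with hL
  have hinj : Function.Injective L := by
    rw [← LinearMap.ker_eq_bot, eq_bot_iff]
    intro g hg
    simp only [LinearMap.mem_ker, hL, Fintype.linearCombination_apply] at hg
    have := Fintype.linearIndependent_iff.mp hli g hg
    simp only [Submodule.mem_bot]
    ext i; exact this i
  have hemb := LinearMap.isClosedEmbedding_of_injective (LinearMap.ker_eq_bot.mpr hinj) (f := L)
  have horth : IsClosed {g : t → ℝ | ∀ i, 0 ≤ g i} := by
    have : {g : t → ℝ | ∀ i, 0 ≤ g i} = ⋂ i, {g | 0 ≤ g i} := by ext g; simp [Set.mem_iInter]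
    rw [this]
    exact isClosed_iInter fun i => isClosed_le continuous_const (continuous_apply i)
  have himg := hemb.isClosedMap _ horth
  convert himg using 1
  ext x
  constructor
  · rintro ⟨y, hy, rfl⟩
    refine ⟨fun i => y i, fun i => hy i, ?_⟩
    simp [hL, Fintype.linearCombination_apply]
    rw [← Finset.sum_attach t (fun i => y i • v i)]
  · rintro ⟨g, hg, rfl⟩
    refine ⟨fun i => if h : i ∈ t then g ⟨i, h⟩ else 0, fun i => by by_cases h : i ∈ t <;> simp [h] <;> exact hg _, ?_⟩
    simp [hL, Fintype.linearCombination_apply]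
    rw [← Finset.sum_attach t]
    exact Finset.sum_congr rfl fun i _ => by simp

lemma carath {m : ℕ} (v : Fin m → H) :
    ∀ N (y : Fin m → ℝ), (∀ i, 0 ≤ y i) → ({i | y i ≠ 0} : Finset (Fin m)).card ≤ N →
      ∃ t : Finset (Fin m), LinearIndependent ℝ (fun i : t => v i) ∧
        ∃ z : Fin m → ℝ, (∀ i, 0 ≤ z i) ∧ ∑ i, y i • v i = ∑ i ∈ t, z i • v i := by
  classical
  intro N
  induction N with
  | zero =>
    intro y hy hc
    have hy0 : ∀ i, y i = 0 := by
      intro i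
      by_contra h
      have : i ∈ ({i | y i ≠ 0} : Finset (Fin m)) := by simpa using h
      have := Finset.card_pos.mpr ⟨i, this⟩
      omega
    refine ⟨∅, linearIndependent_empty_type, 0, by simp, by simp [hy0]⟩
  | succ N ih =>
    intro y hy hc
    set s : Finset (Fin m) := {i | y i ≠ 0} with hs
    have hsum : ∑ i, y i • v i = ∑ i ∈ s, y i • v i := by
      refine (Finset.sum_subset (Finset.subset_univ s) ?_).symm
      intro i _ hi
      have : y i = 0 := by by_contra h; exact hi (by simp [hs, h])
      simp [this]
    by_cases hli : LinearIndependent ℝ (fun i : s => v i)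
    · exact ⟨s, hli, y, hy, hsum⟩
    · -- get a dependence relation
      obtain ⟨g, hg0, j, hgj⟩ := Fintype.not_linearIndependent_iff.mp hli
      set c : Fin m → ℝ := fun i => if h : i ∈ s then g ⟨i, h⟩ else 0 with hcdef
      have hcs : ∑ i ∈ s, c i • v i = 0 := by
        rw [← Finset.sum_attach s (fun i => c i • v i)]
        rw [← hg0]
        exact Finset.sum_congr rfl fun i _ => by simp [hcdef]
      have hcex : ∃ c : Fin m → ℝ, (∀ i, i ∉ s → c i = 0) ∧ ∑ i ∈ s, c i • v i = 0 ∧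
          ∃ i ∈ s, 0 < c i := by
        rcases lt_trichotomy (g j) 0 with h | h | h
        · refine ⟨-c, fun i hi => by simp [hcdef, hi], by simp only [Pi.neg_apply, neg_smul]; rw [Finset.sum_neg_distrib, hcs, neg_zero], j, j.2, ?_⟩
          · simp only [Pi.neg_apply, hcdef, j.2, dif_pos]
            simpa using h
        · exact absurd h hgj
        · exact ⟨c, fun i hi => by simp [hcdef, hi], hcs, j, j.2, by simp [hcdef, j.2]; exact h⟩
      clear hcs hg0 hgj hcdef
      obtain ⟨c, hc0, hcs, hcpos⟩ := hcex
      set T : Finset (Fin m) := {i ∈ s | 0 < c i} with hT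
      have hTne : T.Nonempty := by
        obtain ⟨i, hi, hci⟩ := hcpos
        exact ⟨i, by simp [hT, hi, hci]⟩
      obtain ⟨i₀, hi₀T, hmin⟩ := Finset.exists_min_image T (fun i => y i / c i) hTne
      have hi₀s : i₀ ∈ s := (Finset.mem_filter.mp hi₀T).1
      have hci₀ : 0 < c i₀ := (Finset.mem_filter.mp hi₀T).2
      set r : ℝ := y i₀ / c i₀ with hr
      have hr0 : 0 ≤ r := div_nonneg (hy i₀) hci₀.le
      set y' : Fin m → ℝ := fun i => y i - r * c i with hy'
      have hy'0 : ∀ i, 0 ≤ y' i := by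
        intro i
        rcases le_or_gt (c i) 0 with h | h
        · have : r * c i ≤ 0 := mul_nonpos_of_nonneg_of_nonpos hr0 h
          simp only [hy']; linarith [hy i]
        · have his : i ∈ s := by
            by_contra hns; exact absurd (hc0 i hns) (by linarith)
          have hiT : i ∈ T := Finset.mem_filter.mpr ⟨his, h⟩
          have := hmin i hiT
          simp only [hy']
          rw [div_le_div_iff₀ hci₀ h] at this
          have : r * c i ≤ y i := by
            rw [hr, div_mul_eq_mul_div, div_le_iff₀ hci₀]
            linarith
          linarith
      have hy'i₀ : y' i₀ = 0 := by
        simp only [hy', hr]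
        field_simp
        ring
      have hsub : ({i | y' i ≠ 0} : Finset (Fin m)) ⊆ s.erase i₀ := by
        intro i hi
        simp only [Finset.mem_filter, Finset.mem_univ, true_and] at hi
        refine Finset.mem_erase.mpr ⟨?_, ?_⟩
        · rintro rfl; exact hi (by simpa using hy'i₀)
        · by_contra hns
          exact hi (by simp [hy', hc0 i hns, (by by_contra h; exact hns (by simp [hs, h]) : y i = 0)])
      have hcard : ({i | y' i ≠ 0} : Finset (Fin m)).card ≤ N := by
        have h1 := Finset.card_le_card hsub
        have h2 : (s.erase i₀).card = s.card - 1 := Finset.card_erase_of_mem hi₀s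
        have h3 : 1 ≤ s.card := Finset.card_pos.mpr ⟨i₀, hi₀s⟩
        omega
      have hsum' : ∑ i, y' i • v i = ∑ i, y i • v i := by
        have hcu : ∑ i, c i • v i = 0 := by
          rw [← hcs]
          exact (Finset.sum_subset (Finset.subset_univ s) (fun i _ hi => by simp [hc0 i hi])).symm
        calc ∑ i, y' i • v i = ∑ i, (y i • v i - r • (c i • v i)) := by
              refine Finset.sum_congr rfl fun i _ => ?_
              simp [hy', sub_smul, smul_smul]
            _ = ∑ i, y i • v i - r • ∑ i, c i • v i := by
              rw [Finset.sum_sub_distrib, Finset.smul_sum]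
            _ = ∑ i, y i • v i := by rw [hcu, smul_zero, sub_zero]
      obtain ⟨t, hli', z, hz, hzs⟩ := ih y' hy'0 hcard
      exact ⟨t, hli', z, hz, by rw [← hsum', hzs]⟩

lemma cone_isClosed {m : ℕ} (v : Fin m → H) :
    IsClosed {x : H | ∃ y : Fin m → ℝ, (∀ i, 0 ≤ y i) ∧ x = ∑ i, y i • v i} := by
  classical
  have heq : {x : H | ∃ y : Fin m → ℝ, (∀ i, 0 ≤ y i) ∧ x = ∑ i, y i • v i} =
      ⋃ t : {t : Finset (Fin m) // LinearIndependent ℝ (fun i : t => v i)},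
        {x : H | ∃ y : Fin m → ℝ, (∀ i, 0 ≤ y i) ∧ x = ∑ i ∈ (t : Finset (Fin m)), y i • v i} := by
    ext x
    simp only [Set.mem_iUnion, Set.mem_setOf_eq]
    constructor
    · rintro ⟨y, hy, rfl⟩
      obtain ⟨t, hli, z, hz, hzs⟩ := carath v m y hy ((Finset.card_le_univ _).trans (by simp))
      exact ⟨⟨t, hli⟩, z, hz, hzs⟩
    · rintro ⟨⟨t, hli⟩, y, hy, rfl⟩
      refine ⟨fun i => if i ∈ t then y i else 0, fun i => by by_cases h : i ∈ t <;> simp [h, hy i], ?_⟩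
      rw [← Finset.sum_subset (Finset.subset_univ t) (f := fun i => (if i ∈ t then y i else 0) • v i)
        (fun i _ hi => by simp [hi])]
      exact Finset.sum_congr rfl fun i hi => by simp [hi]
  rw [heq]
  exact isClosed_iUnion_of_finite fun t => closed_cone_of_li v t t.2

lemma euc_sum_apply {k m : ℕ} (s : Finset (Fin m)) (f : Fin m → EuclideanSpace ℝ (Fin k))
    (j : Fin k) : (∑ i ∈ s, f i) j = ∑ i ∈ s, f i j := by
  classical
  induction s using Finset.induction with
  | empty => rfl
  | insert a s h ih => rw [Finset.sum_insert h, Finset.sum_insert h, PiLp.add_apply, ih]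

lemma farkas_single {p n : ℕ} (A : Matrix (Fin p) (Fin n) ℝ) (b : Fin p → ℝ)
    (c : Fin n → ℝ) (d : ℝ) (hne : ∃ x, A.mulVec x ≤ b)
    (h : ∀ x, A.mulVec x ≤ b → c ⬝ᵥ x ≤ d) :
    ∃ y : Fin p → ℝ, (∀ i, 0 ≤ y i) ∧ A.transpose.mulVec y = c ∧ b ⬝ᵥ y ≤ d := by
  classical
  set v : Fin (p + 1) → EuclideanSpace ℝ (Fin (n + 1)) :=
    fun i => WithLp.toLp 2 ((Fin.lastCases (Fin.snoc (0 : Fin n → ℝ) 1)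
      (fun i => Fin.snoc (fun j => A i j) (b i)) i : Fin (n + 1) → ℝ)) with hv
  set S := {x : EuclideanSpace ℝ (Fin (n + 1)) |
    ∃ y : Fin (p + 1) → ℝ, (∀ i, 0 ≤ y i) ∧ x = ∑ i, y i • v i} with hS
  set z : EuclideanSpace ℝ (Fin (n + 1)) := WithLp.toLp 2 (Fin.snoc c d : Fin (n + 1) → ℝ) with hzdef
  by_cases hz : z ∈ S
  · obtain ⟨y, hy, hyz⟩ := hz
    refine ⟨fun i => y i.castSucc, fun i => hy _, ?_, ?_⟩
    · funext j
      have : z (Fin.castSucc j) = (∑ i, y i • v i) (Fin.castSucc j) := by rw [hyz]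
      rw [euc_sum_apply] at this
      simp only [hzdef, PiLp.toLp_apply, Fin.snoc_castSucc, PiLp.smul_apply, smul_eq_mul] at this
      rw [Fin.sum_univ_castSucc] at this
      simp only [hv, PiLp.toLp_apply, Fin.lastCases_castSucc, Fin.lastCases_last, Fin.snoc_castSucc] at this
      simp only [Matrix.mulVec, dotProduct, Matrix.transpose_apply]
      rw [this]
      simp [mul_comm]
    · have : z (Fin.last n) = (∑ i, y i • v i) (Fin.last n) := by rw [hyz]
      rw [euc_sum_apply] at this
      simp only [hzdef, PiLp.toLp_apply, Fin.snoc_last, PiLp.smul_apply, smul_eq_mul] at this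
      rw [Fin.sum_univ_castSucc] at this
      simp only [hv, PiLp.toLp_apply, Fin.lastCases_castSucc, Fin.lastCases_last, Fin.snoc_last] at this
      have hyl : 0 ≤ y (Fin.last p) := hy _
      simp only [dotProduct]
      rw [this]
      have : ∑ i : Fin p, b i * y i.castSucc = ∑ i : Fin p, y i.castSucc * b i :=
        Finset.sum_congr rfl fun i _ => mul_comm _ _
      rw [this]
      nlinarith
  · -- separation
    set K : ConvexCone ℝ (EuclideanSpace ℝ (Fin (n + 1))) :=
      { carrier := S
        smul_mem' := by
          rintro t ht x ⟨y, hy, rfl⟩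
          exact ⟨t • y, fun i => mul_nonneg ht.le (hy i), by
            rw [Finset.smul_sum]; exact Finset.sum_congr rfl fun i _ => by
              simp [smul_smul]⟩
        add_mem' := by
          rintro x ⟨y, hy, rfl⟩ x' ⟨y', hy', rfl⟩
          exact ⟨y + y', fun i => add_nonneg (hy i) (hy' i), by
            rw [← Finset.sum_add_distrib]; exact Finset.sum_congr rfl fun i _ => by
              simp [add_smul]⟩ } with hK
    have hKne : (K : Set (EuclideanSpace ℝ (Fin (n + 1)))).Nonempty :=
      ⟨0, ⟨0, fun i => le_refl _, by simp⟩⟩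
    have hKc : IsClosed (K : Set (EuclideanSpace ℝ (Fin (n + 1)))) := cone_isClosed v
    obtain ⟨w, hw1, hw2⟩ : ∃ w, (∀ x ∈ K, 0 ≤ ⟪x, w⟫_ℝ) ∧ ⟪w, z⟫_ℝ < 0 := by
      let C : ProperCone ℝ (EuclideanSpace ℝ (Fin (n + 1))) :=
        { carrier := S
          zero_mem' := ⟨0, fun i => le_refl _, by simp⟩
          add_mem' := fun hx hx' => K.add_mem hx hx'
          smul_mem' := by
            rintro c x ⟨y, hy, rfl⟩
            exact ⟨(c : ℝ) • y, fun i => mul_nonneg c.2 (hy i), by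
              change (c : ℝ) • ∑ i, y i • v i = _; rw [Finset.smul_sum]; exact Finset.sum_congr rfl fun i _ => by
                simp [smul_smul]⟩
          isClosed' := hKc }
      obtain ⟨w, h1, h2⟩ := C.hyperplane_separation' (x₀ := z) hz
      exact ⟨w, h1, by rwa [real_inner_comm]⟩
    -- members of K
    have hvK : ∀ i, v i ∈ K := by
      intro i
      refine ⟨fun j => if j = i then 1 else 0, fun j => by by_cases hji : j = i <;> simp [hji], ?_⟩
      rw [show ∑ j, (if j = i then (1:ℝ) else 0) • v j = ∑ j, (if j = i then v j else 0) from
        Finset.sum_congr rfl fun j _ => by split <;> simp]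
      simp
    set u : Fin n → ℝ := fun j => w (Fin.castSucc j) with hu
    set t : ℝ := w (Fin.last n) with ht
    have hinner : ∀ x : EuclideanSpace ℝ (Fin (n + 1)),
        ⟪x, w⟫_ℝ = ∑ k, x k * w k := by
      intro x
      simp [PiLp.inner_apply, RCLike.inner_apply, conj_trivial]
      exact Finset.sum_congr rfl fun _ _ => mul_comm _ _
    have htpos : 0 ≤ t := by
      have := hw1 _ (hvK (Fin.last p))
      rw [hinner] at this
      rw [Fin.sum_univ_castSucc] at this
      simpa [hv, Fin.lastCases_last, Fin.snoc_castSucc, Fin.snoc_last, ht] using this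
    have hrow : ∀ i : Fin p, 0 ≤ ∑ j, A i j * u j + b i * t := by
      intro i
      have := hw1 _ (hvK (Fin.castSucc i))
      rw [hinner] at this
      rw [Fin.sum_univ_castSucc] at this
      simpa [hv, Fin.lastCases_castSucc, Fin.snoc_castSucc, Fin.snoc_last, hu, ht] using this
    have hzlt : ∑ j, c j * u j + d * t < 0 := by
      have h2 : ⟪w, z⟫_ℝ = ∑ k, w k * z k := by
        simp [PiLp.inner_apply, RCLike.inner_apply, conj_trivial]
        exact Finset.sum_congr rfl fun _ _ => mul_comm _ _
      rw [h2] at hw2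
      rw [Fin.sum_univ_castSucc] at hw2
      simp only [hzdef, PiLp.toLp_apply, Fin.snoc_castSucc, Fin.snoc_last] at hw2
      calc ∑ j, c j * u j + d * t = ∑ j, w j.castSucc * c j + w (Fin.last n) * d := by
            rw [Finset.sum_congr rfl fun j (_ : j ∈ Finset.univ) => mul_comm (c j) (u j)]
            simp [hu, ht, mul_comm]
        _ < 0 := hw2
    rcases eq_or_lt_of_le htpos with htz | htp
    · -- t = 0 : unbounded direction
      obtain ⟨x₀, hx₀⟩ := hne
      set CU := ∑ j, c j * u j with hCU
      have hCUneg : CU < 0 := by rw [hCU]; rw [← htz] at hzlt; linarith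
      set μ : ℝ := (c ⬝ᵥ x₀ - d - 1) / CU with hμ
      have hμpos : 0 < μ := by
        have h1 : c ⬝ᵥ x₀ ≤ d := h x₀ hx₀
        apply div_pos_of_neg_of_neg <;> linarith
      have hμCU : μ * CU = c ⬝ᵥ x₀ - d - 1 := by
        rw [hμ, div_mul_cancel₀ _ (ne_of_lt hCUneg)]
      clear hμ
      clear_value μ
      set x' : Fin n → ℝ := fun j => x₀ j - μ * u j with hx'
      have hfeas : A.mulVec x' ≤ b := by
        intro i
        have hr := hrow i
        rw [← htz] at hr
        simp only [mul_zero, add_zero] at hr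
        have : A.mulVec x' i = A.mulVec x₀ i - μ * ∑ j, A i j * u j := by
          simp only [Matrix.mulVec, dotProduct, hx', Finset.mul_sum, mul_sub,
            Finset.sum_sub_distrib]
          congr 1
          exact Finset.sum_congr rfl fun j _ => by ring
        rw [this]
        have := hx₀ i
        nlinarith
      have hcx' : c ⬝ᵥ x' ≤ d := h x' hfeas
      have : c ⬝ᵥ x' = c ⬝ᵥ x₀ - μ * CU := by
        simp only [dotProduct, hx', Finset.mul_sum, mul_sub, Finset.sum_sub_distrib, hCU]
        congr 1
        exact Finset.sum_congr rfl fun j _ => by ring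
      rw [this, hμCU] at hcx'
      linarith
    · -- t > 0
      set x' : Fin n → ℝ := fun j => -u j / t with hx'
      have hfeas : A.mulVec x' ≤ b := by
        intro i
        have hr := hrow i
        have : A.mulVec x' i = -(∑ j, A i j * u j) / t := by
          simp only [Matrix.mulVec, dotProduct, hx']
          rw [← Finset.sum_neg_distrib, Finset.sum_div]
          exact Finset.sum_congr rfl fun j _ => by ring
        rw [this, div_le_iff₀ htp]
        nlinarith
      have hcx' : c ⬝ᵥ x' ≤ d := h x' hfeas
      have : c ⬝ᵥ x' = -(∑ j, c j * u j) / t := by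
        simp only [dotProduct, hx']
        rw [← Finset.sum_neg_distrib, Finset.sum_div]
        exact Finset.sum_congr rfl fun j _ => by ring
      rw [this, div_le_iff₀ htp] at hcx'
      nlinarith

/-- Affine form of Farkas' lemma. -/
theorem farkas_affine (p q n : ℕ) (A : Matrix (Fin p) (Fin n) ℝ) (b : Fin p → ℝ)
    (E : Matrix (Fin q) (Fin n) ℝ) (F : Fin q → ℝ)
    (hne : ∃ x : Fin n → ℝ, A.mulVec x ≤ b) :
    (∀ x : Fin n → ℝ, A.mulVec x ≤ b → E.mulVec x ≤ F) ↔
      ∃ P : Matrix (Fin q) (Fin p) ℝ,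
        (∀ i j, 0 ≤ P i j) ∧ P * A = E ∧ P.mulVec b ≤ F := by
  constructor
  · intro himp
    have key : ∀ i : Fin q, ∃ y : Fin p → ℝ, (∀ k, 0 ≤ y k) ∧
        A.transpose.mulVec y = E i ∧ b ⬝ᵥ y ≤ F i := by
      intro i
      refine farkas_single A b (E i) (F i) hne (fun x hx => ?_)
      exact himp x hx i
    choose y hy hyA hyb using key
    refine ⟨Matrix.of fun i k => y i k, fun i k => hy i k, ?_, ?_⟩
    · ext i j
      have := congrFun (hyA i) j
      simp only [Matrix.mulVec, dotProduct, Matrix.transpose_apply] at this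
      simp only [Matrix.mul_apply, Matrix.of_apply]
      rw [← this]
      exact Finset.sum_congr rfl fun k _ => mul_comm _ _
    · intro i
      have := hyb i
      simpa [Matrix.mulVec, dotProduct, mul_comm] using this
  · rintro ⟨P, hP, hPA, hPb⟩ x hx i
    have h1 : E.mulVec x i = P.mulVec (A.mulVec x) i := by
      rw [← hPA, ← Matrix.mulVec_mulVec]
    rw [h1]
    refine le_trans ?_ (hPb i)
    simp only [Matrix.mulVec, dotProduct]
    exact Finset.sum_le_sum fun k _ => mul_le_mul_of_nonneg_left (hx k) (hP i k)
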